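/- Let n and b be natural numbers with b ≥ 2. Then for every nonzero element t of the Thabit numerical semigroup base b, T_b(n), the number b·t + (b−1) also belongs to T_b(n). -/

import Mathlib

/-- The Thabit numerical semigroup base `b`: the additive submonoid of ℕ generated by
`{(b+1)·b^(n+i) − 1 : i ∈ ℕ}`. -/
def thabitSemigroup (b n : ℕ) : AddSubmonoid ℕ :=
  AddSubmonoid.closure {m : ℕ | ∃ i : ℕ, m = (b + 1) * b ^ (n + i) - 1}

theorem thabit_mul_add_mem (n b : ℕ) (hb : 2 ≤ b) (t : ℕ)
    (ht : t ∈ thabitSemigroup b n) (ht0 : t ≠ 0) :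
    b * t + (b - 1) ∈ thabitSemigroup b n := by
  have key : ∀ t ∈ thabitSemigroup b n,
      t = 0 ∨ b * t + (b - 1) ∈ thabitSemigroup b n := by
    intro t ht
    induction ht using AddSubmonoid.closure_induction with
    | mem g hg =>
      right
      obtain ⟨i, rfl⟩ := hg
      apply AddSubmonoid.subset_closure
      refine ⟨i + 1, ?_⟩
      have h1 : 1 ≤ (b + 1) * b ^ (n + i) :=
        Nat.one_le_iff_ne_zero.mpr (by positivity)
      have h2 : (b + 1) * b ^ (n + (i + 1)) = b * ((b + 1) * b ^ (n + i)) := by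
        ring
      have h3 : b * ((b + 1) * b ^ (n + i) - 1) = b * ((b + 1) * b ^ (n + i)) - b := by
        rw [Nat.mul_sub, Nat.mul_one]
      have h4 : b ≤ b * ((b + 1) * b ^ (n + i)) := Nat.le_mul_of_pos_right b (by positivity)
      omega
    | zero => left; rfl
    | add x y hx hy ihx ihy =>
      rcases ihx with rfl | ihx
      · simpa using ihy
      rcases ihy with rfl | ihy
      · exact Or.inr (by simpa using ihx)
      right
      have hby : b * y ∈ thabitSemigroup b n := by
        have := AddSubmonoid.nsmul_mem _ hy b
        simpa [nsmul_eq_mul, thabitSemigroup] using this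
      have : b * (x + y) + (b - 1) = (b * x + (b - 1)) + b * y := by ring
      rw [this]
      exact AddSubmonoid.add_mem _ ihx hby
  rcases key t ht with rfl | h
  · exact absurd rfl ht0
  · exact h
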